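/- Let X be c0(ℤ) or ℓp(ℤ) with 1 ≤ p < ∞, and let F_w be an invertible bilateral weighted forward shift on X. Then F_w is uniformly topologically expansive if and only if there exists a decomposition ℤ = I₊ ∪ I₋ such that |w_{i+n-1} ⋯ w_i| → ∞ uniformly for i ∈ I₊ as n → ∞, and |w_{i-n} ⋯ w_{i-1}|^{-1} → ∞ uniformly for i ∈ I₋ as n → ∞. -/

import Mathlib

open Finset

set_option linter.unusedSectionVars false
set_option linter.unusedVariables false
set_option maxHeartbeats 1000000

/-- `ℓᵖ(ℤ)`. -/
abbrev LpZ (p : ENNReal) := lp (fun _ : ℤ => ℝ) p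

/-- `c₀(ℤ)`. -/
abbrev C0Z := ZeroAtInftyContinuousMap ℤ ℝ

/-- An invertible operator `T` on a normed space is uniformly topologically expansive
if the unit sphere decomposes as `A ∪ B` with `‖Tⁿx‖ → ∞` uniformly on `A` and
`‖T⁻ⁿx‖ → ∞` uniformly on `B`. -/
def UnifTopExpansive {X : Type*} [NormedAddCommGroup X] [NormedSpace ℝ X]
    (T : X ≃L[ℝ] X) : Prop :=
  ∃ A B : Set X, A ∪ B = {x : X | ‖x‖ = 1} ∧
    (∀ M : ℝ, ∃ N : ℕ, ∀ n ≥ N, ∀ x ∈ A, M ≤ ‖((T : X →L[ℝ] X) ^ n) x‖) ∧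
    (∀ M : ℝ, ∃ N : ℕ, ∀ n ≥ N, ∀ x ∈ B, M ≤ ‖((T.symm : X →L[ℝ] X) ^ n) x‖)

/-- There is a decomposition `ℤ = I₊ ∪ I₋` with `|w_{i+n-1} ⋯ w_i| → ∞` uniformly on `I₊`
and `|w_{i-n} ⋯ w_{i-1}|⁻¹ → ∞` uniformly on `I₋`. -/
def WeightDecomp (w : ℤ → ℝ) : Prop :=
  ∃ Ip Im : Set ℤ, Ip ∪ Im = Set.univ ∧
    (∀ M : ℝ, ∃ N : ℕ, ∀ n ≥ N, ∀ i ∈ Ip, M ≤ |∏ j ∈ Finset.range n, w (i + j)|) ∧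
    (∀ M : ℝ, ∃ N : ℕ, ∀ n ≥ N, ∀ i ∈ Im, M ≤ |∏ j ∈ Finset.range n, w (i - 1 - j)|⁻¹)

/-! ### Weight products -/

def Pw (w : ℤ → ℝ) (n : ℕ) (i : ℤ) : ℝ := ∏ j ∈ Finset.range n, w (i + j)

lemma Pw_zero (w : ℤ → ℝ) (i : ℤ) : Pw w 0 i = 1 := by simp [Pw]

lemma Pw_succ (w : ℤ → ℝ) (n : ℕ) (i : ℤ) : Pw w (n+1) i = Pw w n i * w (i + n) := by
  simp [Pw, Finset.prod_range_succ]

lemma Pw_succ' (w : ℤ → ℝ) (n : ℕ) (i : ℤ) : Pw w (n+1) i = w i * Pw w n (i+1) := by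
  rw [Pw, Finset.prod_range_succ']
  rw [mul_comm]
  congr 1
  · simp
  · refine Finset.prod_congr rfl fun j _ => ?_
    congr 1
    push_cast
    ring

lemma Qw_eq (w : ℤ → ℝ) (n : ℕ) (i : ℤ) :
    ∏ j ∈ Finset.range n, w (i - 1 - j) = Pw w n (i - n) := by
  rw [Pw, ← Finset.prod_range_reflect]
  refine Finset.prod_congr rfl fun j hj => ?_
  congr 1
  rw [Finset.mem_range] at hj
  omega

/-! ### Generic coordinate formulas for a weighted shift -/

section Generic
variable {X : Type*} [NormedAddCommGroup X] [NormedSpace ℝ X]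
variable (w : ℤ → ℝ) (T : X ≃L[ℝ] X) (c : X → ℤ → ℝ)

lemma pow_coord (hc : ∀ x n, c (T x) n = w (n-1) * c x (n-1)) :
    ∀ (n : ℕ) (x : X) (m : ℤ),
      c (((T : X →L[ℝ] X) ^ n) x) m = Pw w n (m - n) * c x (m - n) := by
  intro n
  induction n with
  | zero => intro x m; simp [Pw_zero]
  | succ n ih =>
    intro x m
    rw [pow_succ, ContinuousLinearMap.mul_apply, ContinuousLinearEquiv.coe_coe, ih (T x) m,
      hc x (m - n)]
    have h1 : (m - (n:ℤ)) - 1 = m - ((n+1 : ℕ) : ℤ) := by push_cast; ring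
    rw [h1]
    have h2 : Pw w (n+1) (m - ((n+1:ℕ):ℤ)) = w (m - ((n+1:ℕ):ℤ)) * Pw w n (m - n) := by
      rw [Pw_succ']
      congr 2
      push_cast; ring
    rw [h2]
    ring

lemma w_ne (hc : ∀ x n, c (T x) n = w (n-1) * c x (n-1))
    (hex : ∀ n : ℤ, ∃ y : X, c y n ≠ 0) : ∀ n, w n ≠ 0 := by
  intro n hw
  obtain ⟨y, hy⟩ := hex (n + 1)
  apply hy
  have := hc (T.symm y) (n + 1)
  rw [T.apply_symm_apply] at this
  rw [this]
  simp [hw]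

lemma symm_coord (hc : ∀ x n, c (T x) n = w (n-1) * c x (n-1)) (hw : ∀ n, w n ≠ 0) :
    ∀ (y : X) (m : ℤ), c (T.symm y) m = (w m)⁻¹ * c y (m + 1) := by
  intro y m
  have := hc (T.symm y) (m + 1)
  rw [T.apply_symm_apply] at this
  simp only [add_sub_cancel_right] at this
  rw [this]
  field_simp [hw m]

lemma symm_pow_coord (hc : ∀ x n, c (T x) n = w (n-1) * c x (n-1)) (hw : ∀ n, w n ≠ 0) :
    ∀ (n : ℕ) (x : X) (m : ℤ),
      c (((T.symm : X →L[ℝ] X) ^ n) x) m = (Pw w n m)⁻¹ * c x (m + n) := by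
  intro n
  induction n with
  | zero => intro x m; simp [Pw_zero]
  | succ n ih =>
    intro x m
    rw [pow_succ, ContinuousLinearMap.mul_apply, ContinuousLinearEquiv.coe_coe,
      ih (T.symm x) m, symm_coord w T c hc hw x (m + n)]
    rw [Pw_succ, mul_inv]
    have : m + ((n:ℤ)) + 1 = m + ((n+1:ℕ):ℤ) := by push_cast; ring
    rw [this]
    ring

end Generic

/-! ### auxiliary real inequality -/

lemma rpow_chain (q M C : ℝ) (hq : 1 ≤ q) (hC : 0 ≤ C)
    (h : (max (2*|M|) 1)^q * (1/2) ≤ C^q) : M ≤ C := by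
  rcases le_or_gt M 0 with h0 | h0
  · exact h0.trans hC
  have hq0 : 0 < q := lt_of_lt_of_le one_pos hq
  have hM' : (0:ℝ) ≤ 2*M := by linarith
  have h1 : (2*M)^q ≤ (max (2*|M|) 1)^q :=
    Real.rpow_le_rpow hM' (le_max_of_le_left (by rw [abs_of_pos h0])) hq0.le
  have h2 : (2*M)^q = 2^q * M^q := Real.mul_rpow (by norm_num) h0.le
  have h3 : (2:ℝ) ≤ 2^q := by
    nth_rewrite 1 [← Real.rpow_one 2]
    exact Real.rpow_le_rpow_of_exponent_le one_le_two hq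
  have h4 : M^q ≤ C^q := by
    have hMq : (0:ℝ) ≤ M^q := Real.rpow_nonneg h0.le q
    nlinarith
  exact (Real.rpow_le_rpow_iff h0.le hC hq0).mp h4

/-! ### The ℓᵖ case -/

section LpCase
variable (p : ENNReal) [Fact (1 ≤ p)]

lemma q_pos (hp : p ≠ ⊤) : 0 < p.toReal :=
  ENNReal.toReal_pos (lt_of_lt_of_le one_pos (Fact.out : 1 ≤ p)).ne' hp

lemma q_one (hp : p ≠ ⊤) : 1 ≤ p.toReal := by
  have := ENNReal.toReal_mono hp (Fact.out : 1 ≤ p)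
  simpa using this

noncomputable def eZ (i : ℤ) : LpZ p := lp.single p i (1 : ℝ)

lemma eZ_apply_self (i : ℤ) : (eZ p i : ℤ → ℝ) i = 1 := lp.single_apply_self p i 1

lemma eZ_apply_ne (i m : ℤ) (h : m ≠ i) : (eZ p i : ℤ → ℝ) m = 0 := lp.single_apply_ne p i 1 h

lemma eZ_norm (hp : p ≠ ⊤) (i : ℤ) : ‖eZ p i‖ = 1 := by
  have := lp.norm_single (E := fun _ : ℤ => ℝ) (lt_of_lt_of_le one_pos (Fact.out : 1 ≤ p)) i (1 : ℝ)
  simpa [eZ] using this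

lemma eZ_smul_apply (a : ℝ) (i m : ℤ) :
    ((a • eZ p i : LpZ p) : ℤ → ℝ) m = a * (eZ p i : ℤ → ℝ) m := by
  rw [lp.coeFn_smul]; simp

variable (w : ℤ → ℝ) (T : LpZ p ≃L[ℝ] LpZ p)

lemma lp_pow_single_norm (hp : p ≠ ⊤)
    (hpc : ∀ (n : ℕ) (x : LpZ p) (m : ℤ),
      ((((T : LpZ p →L[ℝ] LpZ p) ^ n) x : LpZ p) : ℤ → ℝ) m = Pw w n (m - n) * x (m - n))
    (n : ℕ) (i : ℤ) :
    ‖((T : LpZ p →L[ℝ] LpZ p) ^ n) (eZ p i)‖ = |Pw w n i| := by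
  have heq : ((T : LpZ p →L[ℝ] LpZ p) ^ n) (eZ p i) = Pw w n i • eZ p (i + n) := by
    apply lp.ext
    funext m
    rw [hpc n (eZ p i) m, eZ_smul_apply]
    by_cases h : m = i + n
    · have h1 : m - n = i := by omega
      rw [h1, h, eZ_apply_self, eZ_apply_self]
    · rw [eZ_apply_ne p i _ (by omega), eZ_apply_ne p (i+n) _ h, mul_zero, mul_zero]
  rw [heq, norm_smul, Real.norm_eq_abs, eZ_norm p hp, mul_one]

lemma lp_symm_pow_single_norm (hp : p ≠ ⊤)
    (hsc : ∀ (n : ℕ) (x : LpZ p) (m : ℤ),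
      ((((T.symm : LpZ p →L[ℝ] LpZ p) ^ n) x : LpZ p) : ℤ → ℝ) m = (Pw w n m)⁻¹ * x (m + n))
    (n : ℕ) (i : ℤ) :
    ‖((T.symm : LpZ p →L[ℝ] LpZ p) ^ n) (eZ p i)‖ = |Pw w n (i - n)|⁻¹ := by
  have heq : ((T.symm : LpZ p →L[ℝ] LpZ p) ^ n) (eZ p i)
      = (Pw w n (i - n))⁻¹ • eZ p (i - n) := by
    apply lp.ext
    funext m
    rw [hsc n (eZ p i) m, eZ_smul_apply]
    by_cases h : m = i - n
    · rw [h]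
      have h1 : i - (n:ℤ) + n = i := by omega
      rw [h1, eZ_apply_self, eZ_apply_self]
    · rw [eZ_apply_ne p i _ (by omega), eZ_apply_ne p (i - n) _ h, mul_zero, mul_zero]
  rw [heq, norm_smul, Real.norm_eq_abs, eZ_norm p hp, mul_one, abs_inv]

lemma lp_chain (hp : p ≠ ⊤) (x y : LpZ p) (g : ℤ → ℝ) (e : ℤ ≃ ℤ)
    (hcoord : ∀ i, (y : ℤ → ℝ) (e i) = g i * x i)
    (s : Set ℤ) (M' : ℝ) (hM' : 0 ≤ M') (hg : ∀ i ∈ s, M' ≤ |g i|)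
    (hs : 1/2 ≤ ∑' i : s, ‖(x : ℤ → ℝ) (i:ℤ)‖ ^ p.toReal) :
    M' ^ p.toReal * (1/2) ≤ ‖y‖ ^ p.toReal := by
  set q := p.toReal with hqdef
  have hq0 : 0 < q := q_pos p hp
  have hsum_y : Summable fun m => ‖(y : ℤ → ℝ) m‖ ^ q := (lp.hasSum_norm hq0 y).summable
  have h1 : ((fun m => ‖(y:ℤ→ℝ) m‖^q) ∘ e) = fun i => ‖g i * (x:ℤ→ℝ) i‖^q :=
    funext fun i => by simp only [Function.comp_apply, hcoord]
  have hre : ∑' i, ‖g i * (x:ℤ→ℝ) i‖^q = ∑' m, ‖(y:ℤ→ℝ) m‖^q := by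
    rw [← h1]; exact e.tsum_eq (fun m => ‖(y:ℤ→ℝ) m‖^q)
  have hsum' : Summable fun i => ‖g i * (x:ℤ→ℝ) i‖^q := by
    rw [← h1]; exact e.summable_iff.mpr hsum_y
  have hsum_x : Summable fun i => ‖(x:ℤ→ℝ) i‖^q := (lp.hasSum_norm hq0 x).summable
  have step : ∀ i : s, M'^q * ‖(x:ℤ→ℝ) (i:ℤ)‖^q ≤ ‖g (i:ℤ) * (x:ℤ→ℝ) (i:ℤ)‖^q := by
    rintro ⟨i, hi⟩
    have h2 : M' * ‖(x:ℤ→ℝ) i‖ ≤ ‖g i * (x:ℤ→ℝ) i‖ := by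
      rw [norm_mul]
      exact mul_le_mul_of_nonneg_right (by rw [Real.norm_eq_abs]; exact hg i hi) (norm_nonneg _)
    calc M'^q * ‖(x:ℤ→ℝ) i‖^q = (M' * ‖(x:ℤ→ℝ) i‖)^q :=
          (Real.mul_rpow hM' (norm_nonneg _)).symm
      _ ≤ _ := Real.rpow_le_rpow (mul_nonneg hM' (norm_nonneg _)) h2 hq0.le
  have t1 : M'^q * ∑' i : s, ‖(x:ℤ→ℝ) (i:ℤ)‖^q ≤ ∑' i : s, ‖g (i:ℤ) * (x:ℤ→ℝ) (i:ℤ)‖^q := by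
    rw [← tsum_mul_left]
    exact Summable.tsum_le_tsum step ((hsum_x.subtype s).mul_left _) (hsum'.subtype s)
  have t2 : ∑' i : s, ‖g (i:ℤ) * (x:ℤ→ℝ) (i:ℤ)‖^q ≤ ∑' i : ℤ, ‖g i * (x:ℤ→ℝ) i‖^q :=
    Summable.tsum_subtype_le (fun i : ℤ => ‖g i * (x:ℤ→ℝ) i‖^q) s
      (fun _ => Real.rpow_nonneg (norm_nonneg _) q) hsum'
  have hnorm : ‖y‖^q = ∑' m, ‖(y:ℤ→ℝ) m‖^q := lp.norm_rpow_eq_tsum hq0 y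
  have hx2 : M'^q * (1/2) ≤ M'^q * ∑' i : s, ‖(x:ℤ→ℝ) (i:ℤ)‖^q :=
    mul_le_mul_of_nonneg_left hs (Real.rpow_nonneg hM' q)
  linarith

lemma lp_split (hp : p ≠ ⊤) (x : LpZ p) (hx : ‖x‖ = 1) (s : Set ℤ) :
    1/2 ≤ ∑' i : s, ‖(x:ℤ→ℝ) (i:ℤ)‖^p.toReal ∨
    1/2 ≤ ∑' i : ↑sᶜ, ‖(x:ℤ→ℝ) (i:ℤ)‖^p.toReal := by
  have hq0 := q_pos p hp
  have hsum : Summable fun i => ‖(x:ℤ→ℝ) i‖^p.toReal := (lp.hasSum_norm hq0 x).summable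
  have htot : ∑' i, ‖(x:ℤ→ℝ) i‖^p.toReal = 1 := by
    rw [← lp.norm_rpow_eq_tsum hq0, hx, Real.one_rpow]
  have hsplit := Summable.tsum_add_tsum_compl (hsum.subtype s) (hsum.subtype sᶜ)
  rw [htot] at hsplit
  by_cases h : 1/2 ≤ ∑' i : s, ‖(x:ℤ→ℝ) (i:ℤ)‖^p.toReal
  · exact Or.inl h
  · push_neg at h
    right
    linarith

lemma lp_iff (hp : p ≠ ⊤)
    (hT : ∀ (x : LpZ p) (n : ℤ), (T x) n = w (n - 1) * x (n - 1)) :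
    UnifTopExpansive T ↔ WeightDecomp w := by
  have hex : ∀ n : ℤ, ∃ y : LpZ p, (y : ℤ → ℝ) n ≠ 0 := fun n =>
    ⟨eZ p n, by rw [eZ_apply_self]; norm_num⟩
  have hw : ∀ n, w n ≠ 0 := w_ne w T (fun x => ⇑x) hT hex
  have hpc : ∀ (n : ℕ) (x : LpZ p) (m : ℤ),
      ((((T : LpZ p →L[ℝ] LpZ p) ^ n) x : LpZ p) : ℤ → ℝ) m = Pw w n (m - n) * x (m - n) :=
    pow_coord w T (fun x => ⇑x) hT
  have hsc : ∀ (n : ℕ) (x : LpZ p) (m : ℤ),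
      ((((T.symm : LpZ p →L[ℝ] LpZ p) ^ n) x : LpZ p) : ℤ → ℝ) m = (Pw w n m)⁻¹ * x (m + n) :=
    symm_pow_coord w T (fun x => ⇑x) hT hw
  constructor
  · rintro ⟨A, B, hAB, hA, hB⟩
    refine ⟨{i | eZ p i ∈ A}, {i | eZ p i ∈ B}, ?_, ?_, ?_⟩
    · apply Set.eq_univ_of_forall
      intro i
      have hmem : eZ p i ∈ A ∪ B := by rw [hAB]; exact eZ_norm p hp i
      rcases hmem with h | h
      · exact Or.inl h
      · exact Or.inr h
    · intro M
      obtain ⟨N, hN⟩ := hA M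
      refine ⟨N, fun n hn i hi => ?_⟩
      have := hN n hn (eZ p i) hi
      rwa [lp_pow_single_norm p w T hp hpc n i] at this
    · intro M
      obtain ⟨N, hN⟩ := hB M
      refine ⟨N, fun n hn i hi => ?_⟩
      have h1 := hN n hn (eZ p i) hi
      rw [lp_symm_pow_single_norm p w T hp hsc n i] at h1
      rw [Qw_eq w n i]
      exact h1
  · rintro ⟨Ip, Im, hU, hPf, hMf⟩
    have hIm : ∀ i, i ∉ Ip → i ∈ Im := by
      intro i h
      have h2 : i ∈ Ip ∪ Im := by rw [hU]; exact Set.mem_univ i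
      rcases h2 with h2 | h2
      · exact absurd h2 h
      · exact h2
    refine ⟨{x : LpZ p | ‖x‖ = 1 ∧ 1/2 ≤ ∑' i : Ip, ‖(x:ℤ→ℝ) (i:ℤ)‖^p.toReal},
            {x : LpZ p | ‖x‖ = 1 ∧ 1/2 ≤ ∑' i : ↑(Ipᶜ), ‖(x:ℤ→ℝ) (i:ℤ)‖^p.toReal},
            ?_, ?_, ?_⟩
    · ext x
      simp only [Set.mem_union, Set.mem_setOf_eq]
      constructor
      · rintro (⟨h, -⟩ | ⟨h, -⟩) <;> exact h
      · intro hx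
        rcases lp_split p hp x hx Ip with h | h
        · exact Or.inl ⟨hx, h⟩
        · exact Or.inr ⟨hx, h⟩
    · intro M
      obtain ⟨N, hN⟩ := hPf (max (2*|M|) 1)
      refine ⟨N, fun n hn x hx => ?_⟩
      obtain ⟨hx1, hxs⟩ := hx
      apply rpow_chain p.toReal M _ (q_one p hp) (norm_nonneg _)
      apply lp_chain p hp x _ (fun i => Pw w n i) (Equiv.addRight (n:ℤ)) ?_ Ip _
        (le_trans zero_le_one (le_max_right _ _)) (fun i hi => hN n hn i hi) hxs
      intro i
      show (((T : LpZ p →L[ℝ] LpZ p)^n) x : LpZ p) (i + n) = Pw w n i * x i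
      rw [hpc n x (i + (n:ℤ)), show i + (n:ℤ) - n = i by ring]
    · intro M
      obtain ⟨N, hN⟩ := hMf (max (2*|M|) 1)
      refine ⟨N, fun n hn x hx => ?_⟩
      obtain ⟨hx1, hxs⟩ := hx
      apply rpow_chain p.toReal M _ (q_one p hp) (norm_nonneg _)
      apply lp_chain p hp x _ (fun k => (Pw w n (k - n))⁻¹) (Equiv.subRight (n:ℤ)) ?_ Ipᶜ _
        (le_trans zero_le_one (le_max_right _ _)) ?_ hxs
      · intro k
        show (((T.symm : LpZ p →L[ℝ] LpZ p)^n) x : LpZ p) (k - n) = (Pw w n (k-n))⁻¹ * x k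
        rw [hsc n x (k - (n:ℤ)), show k - (n:ℤ) + n = k by ring]
      · intro k hk
        have h1 := hN n hn k (hIm k hk)
        rw [Qw_eq w n k] at h1
        simpa [abs_inv] using h1

end LpCase

/-! ### The c₀ case -/

noncomputable def c0e (i : ℤ) : C0Z :=
  ⟨⟨fun n => if n = i then (1:ℝ) else 0, continuous_of_discreteTopology⟩, by
    rw [Filter.cocompact_eq_cofinite]
    have h : (fun n : ℤ => if n = i then (1:ℝ) else 0) =ᶠ[Filter.cofinite] (fun _ => (0:ℝ)) := by
      apply Filter.eventually_cofinite.mpr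
      apply (Set.finite_singleton i).subset
      intro n hn
      simp only [Set.mem_setOf_eq] at hn
      by_contra hni
      exact hn (if_neg (by simpa using hni))
    exact tendsto_const_nhds.congr' h.symm⟩

lemma c0e_apply (i m : ℤ) : c0e i m = if m = i then (1:ℝ) else 0 := rfl

lemma c0_norm_coord (f : C0Z) (m : ℤ) : ‖f m‖ ≤ ‖f‖ := by
  rw [← ZeroAtInftyContinuousMap.norm_toBCF_eq_norm]
  exact f.toBCF.norm_coe_le_norm m

lemma c0_norm_le (f : C0Z) (C : ℝ) (hC : 0 ≤ C) (h : ∀ m, ‖f m‖ ≤ C) : ‖f‖ ≤ C := by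
  rw [← ZeroAtInftyContinuousMap.norm_toBCF_eq_norm]
  exact (BoundedContinuousFunction.norm_le hC).mpr h

lemma c0e_norm (i : ℤ) : ‖c0e i‖ = 1 := by
  apply le_antisymm
  · apply c0_norm_le _ _ zero_le_one
    intro m
    rw [c0e_apply]
    split <;> simp
  · have := c0_norm_coord (c0e i) i
    rw [c0e_apply, if_pos rfl] at this
    simpa using this

lemma c0_smul_apply (a : ℝ) (f : C0Z) (m : ℤ) : (a • f) m = a * f m := rfl

lemma c0_norm_smul (a : ℝ) (f : C0Z) : ‖a • f‖ = |a| * ‖f‖ := by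
  rw [← ZeroAtInftyContinuousMap.norm_toBCF_eq_norm, ← ZeroAtInftyContinuousMap.norm_toBCF_eq_norm]
  have h : (a • f).toBCF = a • f.toBCF := rfl
  rw [h, norm_smul, Real.norm_eq_abs]

section C0Case
variable (w : ℤ → ℝ) (T : C0Z ≃L[ℝ] C0Z)

lemma c0_pow_single_norm
    (hpc : ∀ (n : ℕ) (x : C0Z) (m : ℤ),
      (((T : C0Z →L[ℝ] C0Z) ^ n) x) m = Pw w n (m - n) * x (m - n))
    (n : ℕ) (i : ℤ) :
    ‖((T : C0Z →L[ℝ] C0Z) ^ n) (c0e i)‖ = |Pw w n i| := by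
  have heq : ((T : C0Z →L[ℝ] C0Z) ^ n) (c0e i) = Pw w n i • c0e (i + n) := by
    apply ZeroAtInftyContinuousMap.ext
    intro m
    rw [hpc n (c0e i) m, c0_smul_apply, c0e_apply, c0e_apply]
    by_cases h : m = i + n
    · rw [if_pos h, if_pos (by omega), mul_one, mul_one, show m - (n:ℤ) = i by omega]
    · rw [if_neg h, if_neg (by omega), mul_zero, mul_zero]
  rw [heq, c0_norm_smul, c0e_norm, mul_one]

lemma c0_symm_pow_single_norm
    (hsc : ∀ (n : ℕ) (x : C0Z) (m : ℤ),
      (((T.symm : C0Z →L[ℝ] C0Z) ^ n) x) m = (Pw w n m)⁻¹ * x (m + n))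
    (n : ℕ) (i : ℤ) :
    ‖((T.symm : C0Z →L[ℝ] C0Z) ^ n) (c0e i)‖ = |Pw w n (i - n)|⁻¹ := by
  have heq : ((T.symm : C0Z →L[ℝ] C0Z) ^ n) (c0e i) = (Pw w n (i - n))⁻¹ • c0e (i - n) := by
    apply ZeroAtInftyContinuousMap.ext
    intro m
    rw [hsc n (c0e i) m, c0_smul_apply, c0e_apply, c0e_apply]
    by_cases h : m = i - n
    · rw [if_pos (by omega), if_pos h, mul_one, mul_one, show m = i - (n:ℤ) from h]
    · rw [if_neg (by omega), if_neg h, mul_zero, mul_zero]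
  rw [heq, c0_norm_smul, c0e_norm, mul_one, abs_inv]

lemma c0_iff (hT : ∀ (x : C0Z) (n : ℤ), (T x) n = w (n - 1) * x (n - 1)) :
    UnifTopExpansive T ↔ WeightDecomp w := by
  have hex : ∀ n : ℤ, ∃ y : C0Z, (y : ℤ → ℝ) n ≠ 0 := fun n =>
    ⟨c0e n, by rw [c0e_apply, if_pos rfl]; norm_num⟩
  have hw : ∀ n, w n ≠ 0 := w_ne w T (fun x => ⇑x) hT hex
  have hpc : ∀ (n : ℕ) (x : C0Z) (m : ℤ),
      (((T : C0Z →L[ℝ] C0Z) ^ n) x) m = Pw w n (m - n) * x (m - n) :=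
    pow_coord w T (fun x => ⇑x) hT
  have hsc : ∀ (n : ℕ) (x : C0Z) (m : ℤ),
      (((T.symm : C0Z →L[ℝ] C0Z) ^ n) x) m = (Pw w n m)⁻¹ * x (m + n) :=
    symm_pow_coord w T (fun x => ⇑x) hT hw
  constructor
  · rintro ⟨A, B, hAB, hA, hB⟩
    refine ⟨{i | c0e i ∈ A}, {i | c0e i ∈ B}, ?_, ?_, ?_⟩
    · apply Set.eq_univ_of_forall
      intro i
      have hmem : c0e i ∈ A ∪ B := by rw [hAB]; exact c0e_norm i
      rcases hmem with h | h
      · exact Or.inl h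
      · exact Or.inr h
    · intro M
      obtain ⟨N, hN⟩ := hA M
      refine ⟨N, fun n hn i hi => ?_⟩
      have := hN n hn (c0e i) hi
      rwa [c0_pow_single_norm w T hpc n i] at this
    · intro M
      obtain ⟨N, hN⟩ := hB M
      refine ⟨N, fun n hn i hi => ?_⟩
      have h1 := hN n hn (c0e i) hi
      rw [c0_symm_pow_single_norm w T hsc n i] at h1
      rw [Qw_eq w n i]
      exact h1
  · rintro ⟨Ip, Im, hU, hPf, hMf⟩
    have hIm : ∀ i, i ∉ Ip → i ∈ Im := by
      intro i h
      have h2 : i ∈ Ip ∪ Im := by rw [hU]; exact Set.mem_univ i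
      rcases h2 with h2 | h2
      · exact absurd h2 h
      · exact h2
    refine ⟨{x : C0Z | ‖x‖ = 1 ∧ ∃ i ∈ Ip, 1/2 ≤ ‖x i‖},
            {x : C0Z | ‖x‖ = 1 ∧ ∃ i ∈ Ipᶜ, 1/2 ≤ ‖x i‖}, ?_, ?_, ?_⟩
    · ext x
      simp only [Set.mem_union, Set.mem_setOf_eq]
      constructor
      · rintro (⟨h, -⟩ | ⟨h, -⟩) <;> exact h
      · intro hx
        have hex2 : ∃ i : ℤ, 1/2 ≤ ‖x i‖ := by
          by_contra hcon
          push_neg at hcon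
          have : ‖x‖ ≤ 1/2 := c0_norm_le x (1/2) (by norm_num) fun m => (hcon m).le
          rw [hx] at this
          norm_num at this
        obtain ⟨i, hi⟩ := hex2
        by_cases h : i ∈ Ip
        · exact Or.inl ⟨hx, i, h, hi⟩
        · exact Or.inr ⟨hx, i, h, hi⟩
    · intro M
      obtain ⟨N, hN⟩ := hPf (2*|M|)
      refine ⟨N, fun n hn x hx => ?_⟩
      obtain ⟨hx1, i, hi, hxi⟩ := hx
      have h1 := hN n hn i hi
      have h2 : ((((T : C0Z →L[ℝ] C0Z) ^ n) x) : ℤ → ℝ) (i + n) = Pw w n i * x i := by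
        rw [hpc n x (i + (n:ℤ)), show i + (n:ℤ) - n = i by ring]
      have h3 : ‖(((T : C0Z →L[ℝ] C0Z) ^ n) x) (i + (n:ℤ))‖
          ≤ ‖((T : C0Z →L[ℝ] C0Z) ^ n) x‖ := c0_norm_coord _ _
      rw [h2, norm_mul, Real.norm_eq_abs] at h3
      have h4 : 2*|M| * (1/2) ≤ |Pw w n i| * ‖x i‖ :=
        mul_le_mul h1 hxi (by norm_num) (abs_nonneg _)
      calc M ≤ |M| := le_abs_self M
        _ = 2*|M| * (1/2) := by ring
        _ ≤ |Pw w n i| * ‖x i‖ := h4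
        _ ≤ _ := h3
    · intro M
      obtain ⟨N, hN⟩ := hMf (2*|M|)
      refine ⟨N, fun n hn x hx => ?_⟩
      obtain ⟨hx1, i, hi, hxi⟩ := hx
      have h1 := hN n hn i (hIm i hi)
      rw [Qw_eq w n i] at h1
      have h2 : ((((T.symm : C0Z →L[ℝ] C0Z) ^ n) x) : ℤ → ℝ) (i - n)
          = (Pw w n (i - n))⁻¹ * x i := by
        rw [hsc n x (i - (n:ℤ)), show i - (n:ℤ) + n = i by ring]
      have h3 : ‖(((T.symm : C0Z →L[ℝ] C0Z) ^ n) x) (i - (n:ℤ))‖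
          ≤ ‖((T.symm : C0Z →L[ℝ] C0Z) ^ n) x‖ := c0_norm_coord _ _
      rw [h2, norm_mul, Real.norm_eq_abs, abs_inv] at h3
      have h4 : 2*|M| * (1/2) ≤ |Pw w n (i - n)|⁻¹ * ‖x i‖ :=
        mul_le_mul h1 hxi (by norm_num) (inv_nonneg.mpr (abs_nonneg _))
      calc M ≤ |M| := le_abs_self M
        _ = 2*|M| * (1/2) := by ring
        _ ≤ |Pw w n (i - n)|⁻¹ * ‖x i‖ := h4
        _ ≤ _ := h3

end C0Case

/-- For an invertible bilateral weighted forward shift `F_w` on `ℓᵖ(ℤ)` (`1 ≤ p < ∞`)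
or `c₀(ℤ)`, uniform topological expansivity is equivalent to the weight decomposition
condition. -/
theorem stmt4 (w : ℤ → ℝ) :
    (∀ (p : ENNReal) [Fact (1 ≤ p)], p ≠ ⊤ →
      ∀ T : LpZ p ≃L[ℝ] LpZ p,
        (∀ (x : LpZ p) (n : ℤ), (T x) n = w (n - 1) * x (n - 1)) →
        (UnifTopExpansive T ↔ WeightDecomp w)) ∧
    (∀ T : C0Z ≃L[ℝ] C0Z,
        (∀ (x : C0Z) (n : ℤ), (T x) n = w (n - 1) * x (n - 1)) →
        (UnifTopExpansive T ↔ WeightDecomp w)) := by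
  constructor
  · intro p _ hp T hT
    exact lp_iff p w T hp hT
  · intro T hT
    exact c0_iff w T hT
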